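/- Let (X,Y) ~ Q with Y ∈ [0,∞) and X ∈ ℝ^J whose first coordinate is the constant 1, and suppose E_Q[XX'] is invertible. Let m : [0,∞) → ℝ be continuous, weakly increasing, with m(y)/log(y) → 1 as y → ∞. Assume E_Q[‖X‖] < ∞ and E_Q[‖X·log(Y)‖ | Y>0] < ∞. Define β(a) = E_Q[XX']⁻¹ E_Q[X·m(aY)] and γ = E_Q[XX']⁻¹ E_Q[X·1[Y>0]]. Then for every j ∈ {2,…,J}, β_j(a)/log(a) → γ_j as a → ∞; moreover, if γ_j ≠ 0 for some j ∈ {2,…,J}, then β_j(a) is continuous in a on [0,∞) with β_j(a) → 0 as a → 0 and |β_j(a)| → ∞ as a → ∞, and for every β* ∈ (0,∞) there exists a > 0 with |β_j(a)| = β*. -/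

import Mathlib

open MeasureTheory Filter Set

lemma exists_loglike_bound (m : ℝ → ℝ) (hmono : MonotoneOn m (Ici 0))
    (hll : Tendsto (fun y => m y / Real.log y) atTop (nhds 1)) :
    ∃ C : ℝ, 0 < C ∧ ∀ t : ℝ, 0 ≤ t → |m t| ≤ C * (1 + |Real.log t|) := by
  have h2 : ∀ᶠ y in atTop, |m y / Real.log y| ≤ 2 := by
    have : Tendsto (fun y => |m y / Real.log y|) atTop (nhds |1|) := hll.abs
    simp only [abs_one] at this
    exact this.eventually_le_const (by norm_num)
  obtain ⟨T₀, hT₀⟩ := eventually_atTop.1 h2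
  set T : ℝ := max T₀ 2 with hTdef
  have hT2 : (2 : ℝ) ≤ T := le_max_right _ _
  refine ⟨2 + |m 0| + |m T|, by positivity, fun t ht => ?_⟩
  have h1le : (1:ℝ) ≤ 1 + |Real.log t| := by
    have := abs_nonneg (Real.log t); linarith
  rcases le_or_gt T t with hTt | htT
  · have hlt : 0 < Real.log t := Real.log_pos (by linarith)
    have := hT₀ t (le_trans (le_max_left _ _) hTt)
    have hmt : |m t| ≤ 2 * Real.log t := by
      rw [abs_div] at this
      rw [div_le_iff₀ (by positivity : (0:ℝ) < |Real.log t|)] at this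
      calc |m t| ≤ 2 * |Real.log t| := this
        _ = 2 * Real.log t := by rw [abs_of_pos hlt]
    calc |m t| ≤ 2 * Real.log t := hmt
      _ ≤ (2 + |m 0| + |m T|) * (1 + |Real.log t|) := by
          have h0 : (0:ℝ) ≤ |m 0| := abs_nonneg _
          have h1 : (0:ℝ) ≤ |m T| := abs_nonneg _
          have h3 : Real.log t ≤ |Real.log t| := le_abs_self _
          nlinarith
  · have hm0 : m 0 ≤ m t := hmono self_mem_Ici ht ht
    have hmT : m t ≤ m T := hmono ht (by simp [mem_Ici]; linarith) htT.le
    have hb : |m t| ≤ |m 0| + |m T| := by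
      rw [abs_le]
      constructor
      · have := neg_abs_le (m 0); have := abs_nonneg (m T); linarith
      · have := le_abs_self (m T); have := abs_nonneg (m 0); linarith
    calc |m t| ≤ |m 0| + |m T| := hb
      _ ≤ (2 + |m 0| + |m T|) * (1 + |Real.log t|) := by
          have h0 : (0:ℝ) ≤ |m 0| := abs_nonneg _
          have h1 : (0:ℝ) ≤ |m T| := abs_nonneg _
          nlinarith

set_option maxHeartbeats 1000000 in
theorem stmt_13
    {Ω : Type*} [MeasurableSpace Ω] (μ : Measure Ω) [IsProbabilityMeasure μ]
    {J : ℕ} (hJ : 0 < J)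
    (X : Ω → Fin J → ℝ) (Y : Ω → ℝ)
    (hXmeas : Measurable X) (hYmeas : Measurable Y)
    (hYnonneg : ∀ ω, 0 ≤ Y ω)
    -- the first element of X is a constant
    (hconst : ∀ ω, X ω ⟨0, hJ⟩ = 1)
    (m : ℝ → ℝ)
    (hm_cont : ContinuousOn m (Ici 0))
    (hm_mono : MonotoneOn m (Ici 0))
    (hm_loglike : Tendsto (fun y => m y / Real.log y) atTop (nhds 1))
    -- (finite expectations) E[‖X‖] < ∞ and E[‖X log Y‖ ∣ Y > 0] < ∞
    (hXint : Integrable (fun ω => ‖X ω‖) μ)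
    (hXlogint : IntegrableOn (fun ω => ‖X ω‖ * |Real.log (Y ω)|) {ω | 0 < Y ω} μ)
    (G : Matrix (Fin J) (Fin J) ℝ)
    (hG : G = Matrix.of fun i j => ∫ ω, X ω i * X ω j ∂μ)
    (hGunit : IsUnit G)
    (β : ℝ → Fin J → ℝ)
    (hβ : ∀ a, β a = G⁻¹.mulVec fun i => ∫ ω, X ω i * m (a * Y ω) ∂μ)
    (γ : Fin J → ℝ)
    (hγ : γ = G⁻¹.mulVec fun i => ∫ ω, X ω i * (if 0 < Y ω then (1 : ℝ) else 0) ∂μ) :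
    (∀ j : Fin J, j ≠ ⟨0, hJ⟩ →
      Tendsto (fun a => β a j / Real.log a) atTop (nhds (γ j))) ∧
    (∀ j : Fin J, j ≠ ⟨0, hJ⟩ → γ j ≠ 0 →
      ContinuousOn (fun a => β a j) (Ici 0) ∧
      Tendsto (fun a => β a j) (nhdsWithin 0 (Ici 0)) (nhds 0) ∧
      Tendsto (fun a => |β a j|) atTop atTop ∧
      ∀ βstar : ℝ, 0 < βstar → ∃ a : ℝ, 0 < a ∧ |β a j| = βstar) := by
  classical
  set e0 : Fin J := ⟨0, hJ⟩ with he0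
  -- extend m to a continuous function on all of ℝ
  set m' : ℝ → ℝ := fun t => m (max t 0) with hm'def
  have hm'c : Continuous m' :=
    hm_cont.comp_continuous (continuous_id.max continuous_const) (fun x => le_max_right x 0)
  have hm'eq : ∀ t : ℝ, 0 ≤ t → m' t = m t := fun t ht => by
    simp only [hm'def, max_eq_left ht]
  obtain ⟨C, hCpos, hC⟩ := exists_loglike_bound m hm_mono hm_loglike
  have hYset : MeasurableSet {ω | 0 < Y ω} := measurableSet_lt measurable_const hYmeas
  have hXi : ∀ i, Measurable fun ω => X ω i := fun i => (measurable_pi_apply i).comp hXmeas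
  have hXi_abs : ∀ i ω, |X ω i| ≤ ‖X ω‖ := fun i ω => by
    simpa using norm_le_pi_norm (X ω) i
  -- dominating function
  set g : Ω → ℝ := fun ω =>
    ‖X ω‖ + {ω | 0 < Y ω}.indicator (fun ω => ‖X ω‖ * |Real.log (Y ω)|) ω with hgdef
  have hg_int : Integrable g μ := hXint.add ((integrable_indicator_iff hYset).2 hXlogint)
  have hg_pos : ∀ ω, 0 < Y ω → g ω = ‖X ω‖ + ‖X ω‖ * |Real.log (Y ω)| := by
    intro ω hω; simp only [hgdef, indicator_of_mem (show ω ∈ {ω | 0 < Y ω} from hω)]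
  have hg_zero : ∀ ω, Y ω = 0 → g ω = ‖X ω‖ := by
    intro ω hω
    simp only [hgdef, indicator_of_notMem (show ω ∉ {ω | 0 < Y ω} by simp [hω]), add_zero]
  have hg_nonneg : ∀ ω, 0 ≤ g ω := by
    intro ω
    rcases (hYnonneg ω).lt_or_eq with h | h
    · rw [hg_pos ω h]; positivity
    · rw [hg_zero ω h.symm]; positivity
  have hm0C : |m 0| ≤ C := by
    have := hC 0 le_rfl; simpa [Real.log_zero] using this
  -- measurability of the integrands
  have hmeasF : ∀ (a : ℝ) i, AEStronglyMeasurable (fun ω => X ω i * m' (a * Y ω)) μ :=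
    fun a i => ((hXi i).mul (hm'c.measurable.comp (hYmeas.const_mul a))).aestronglyMeasurable
  -- big-a pointwise bound
  have hbig : ∀ a : ℝ, 3 ≤ a → ∀ i ω, |X ω i * m' (a * Y ω)| ≤ Real.log a * (2 * C * g ω) := by
    intro a ha i ω
    have hL1 : 1 ≤ Real.log a := by
      rw [Real.le_log_iff_exp_le (by linarith)]
      calc Real.exp 1 ≤ 2.7182818286 := Real.exp_one_lt_d9.le
        _ ≤ a := by linarith
    have hXa := hXi_abs i ω
    have hXn : (0:ℝ) ≤ ‖X ω‖ := norm_nonneg _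
    rw [abs_mul]
    rcases (hYnonneg ω).lt_or_eq with hY | hY
    · -- Y ω > 0
      have ht : 0 < a * Y ω := by positivity
      rw [hm'eq _ ht.le, hg_pos ω hY]
      have hmb := hC (a * Y ω) ht.le
      have hlog : |Real.log (a * Y ω)| ≤ Real.log a + |Real.log (Y ω)| := by
        rw [Real.log_mul (by linarith) (ne_of_gt hY)]
        calc |Real.log a + Real.log (Y ω)| ≤ |Real.log a| + |Real.log (Y ω)| := abs_add_le _ _
          _ = Real.log a + |Real.log (Y ω)| := by rw [abs_of_pos (by linarith)]
      have hY' : (0:ℝ) ≤ |Real.log (Y ω)| := abs_nonneg _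
      have hmm : |m (a * Y ω)| ≤ C * (1 + Real.log a + |Real.log (Y ω)|) := by
        calc |m (a * Y ω)| ≤ C * (1 + |Real.log (a * Y ω)|) := hmb
          _ ≤ C * (1 + Real.log a + |Real.log (Y ω)|) := by nlinarith
      calc |X ω i| * |m (a * Y ω)| ≤ ‖X ω‖ * (C * (1 + Real.log a + |Real.log (Y ω)|)) := by
            apply mul_le_mul hXa hmm (abs_nonneg _) hXn
        _ ≤ Real.log a * (2 * C * (‖X ω‖ + ‖X ω‖ * |Real.log (Y ω)|)) := by
            nlinarith [mul_nonneg (mul_nonneg hCpos.le hXn)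
                (by linarith : (0:ℝ) ≤ Real.log a - 1),
              mul_nonneg (mul_nonneg (mul_nonneg hCpos.le hXn) hY')
                (by linarith : (0:ℝ) ≤ 2 * Real.log a - 1)]
    · -- Y ω = 0
      rw [← hY, mul_zero, hm'eq 0 le_rfl, hg_zero ω hY.symm]
      calc |X ω i| * |m 0| ≤ ‖X ω‖ * C := mul_le_mul hXa hm0C (abs_nonneg _) hXn
        _ ≤ Real.log a * (2 * C * ‖X ω‖) := by
            nlinarith [mul_nonneg (mul_nonneg hCpos.le hXn)
                (by linarith : (0:ℝ) ≤ 2 * Real.log a - 1)]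
  -- compact-interval pointwise bound
  have hbnd2 : ∀ A : ℝ, 1 ≤ A → ∀ a, a ∈ Icc (0:ℝ) A → ∀ i ω,
      |X ω i * m' (a * Y ω)| ≤ (C * (2 + Real.log A) + |m 0|) * g ω := by
    intro A hA a ⟨ha0, haA⟩ i ω
    have hlogA : 0 ≤ Real.log A := Real.log_nonneg hA
    have hXa := hXi_abs i ω
    have hXn : (0:ℝ) ≤ ‖X ω‖ := norm_nonneg _
    have hm0' : (0:ℝ) ≤ |m 0| := abs_nonneg _
    rw [abs_mul]
    rcases (hYnonneg ω).lt_or_eq with hY | hY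
    · have ht : 0 ≤ a * Y ω := mul_nonneg ha0 hY.le
      rw [hm'eq _ ht, hg_pos ω hY]
      have hY' : (0:ℝ) ≤ |Real.log (Y ω)| := abs_nonneg _
      -- m 0 ≤ m (a Y) ≤ m (A Y)
      have hmono1 : m 0 ≤ m (a * Y ω) := hm_mono self_mem_Ici ht ht
      have hmono2 : m (a * Y ω) ≤ m (A * Y ω) :=
        hm_mono ht (by simp [mem_Ici]; positivity)
          (mul_le_mul_of_nonneg_right haA hY.le)
      have hAY : |Real.log (A * Y ω)| ≤ Real.log A + |Real.log (Y ω)| := by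
        rw [Real.log_mul (by linarith) (ne_of_gt hY)]
        calc |Real.log A + Real.log (Y ω)| ≤ |Real.log A| + |Real.log (Y ω)| := abs_add_le _ _
          _ = Real.log A + |Real.log (Y ω)| := by rw [abs_of_nonneg hlogA]
      have hmb := hC (A * Y ω) (by positivity)
      have hup : m (A * Y ω) ≤ C * (1 + Real.log A + |Real.log (Y ω)|) := by
        calc m (A * Y ω) ≤ |m (A * Y ω)| := le_abs_self _
          _ ≤ C * (1 + |Real.log (A * Y ω)|) := hmb
          _ ≤ C * (1 + Real.log A + |Real.log (Y ω)|) := by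
              nlinarith [mul_le_mul_of_nonneg_left hAY hCpos.le]
      have hmm : |m (a * Y ω)| ≤ |m 0| + C * (1 + Real.log A + |Real.log (Y ω)|) := by
        rw [abs_le]
        constructor
        · have := neg_abs_le (m 0)
          nlinarith
        · linarith
      calc |X ω i| * |m (a * Y ω)|
          ≤ ‖X ω‖ * (|m 0| + C * (1 + Real.log A + |Real.log (Y ω)|)) :=
            mul_le_mul hXa hmm (abs_nonneg _) hXn
        _ ≤ (C * (2 + Real.log A) + |m 0|) * (‖X ω‖ + ‖X ω‖ * |Real.log (Y ω)|) := by
            nlinarith [mul_nonneg hCpos.le hXn,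
              mul_nonneg (mul_nonneg hCpos.le hXn) hY',
              mul_nonneg (mul_nonneg (mul_nonneg hCpos.le hXn) hlogA) hY',
              mul_nonneg (mul_nonneg hm0' hXn) hY']
    · rw [← hY, mul_zero, hm'eq 0 le_rfl, hg_zero ω hY.symm]
      calc |X ω i| * |m 0| ≤ ‖X ω‖ * |m 0| := mul_le_mul_of_nonneg_right hXa hm0'
        _ ≤ (C * (2 + Real.log A) + |m 0|) * ‖X ω‖ := by
            nlinarith [mul_nonneg (mul_nonneg hCpos.le hlogA) hXn,
              mul_nonneg hCpos.le hXn]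
  -- m and m' agree in the integrals for a ≥ 0
  have hvv' : ∀ a : ℝ, 0 ≤ a → ∀ i,
      (∫ ω, X ω i * m (a * Y ω) ∂μ) = ∫ ω, X ω i * m' (a * Y ω) ∂μ := by
    intro a ha i
    refine integral_congr_ae (Eventually.of_forall fun ω => ?_)
    show X ω i * m (a * Y ω) = X ω i * m' (a * Y ω)
    rw [hm'eq _ (mul_nonneg ha (hYnonneg ω))]
  set w : Fin J → ℝ := fun i => ∫ ω, X ω i * (if 0 < Y ω then (1:ℝ) else 0) ∂μ with hwdef
  -- core limit per coordinate
  have hv1 : ∀ i, Tendsto (fun a => (∫ ω, X ω i * m' (a * Y ω) ∂μ) / Real.log a)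
      atTop (nhds (w i)) := by
    intro i
    have key := tendsto_integral_filter_of_dominated_convergence (μ := μ)
      (F := fun (a : ℝ) ω => X ω i * m' (a * Y ω) / Real.log a)
      (f := fun ω => X ω i * (if 0 < Y ω then (1:ℝ) else 0))
      (l := atTop)
      (bound := fun ω => 2 * C * g ω)
      (Eventually.of_forall fun a =>
        (((hXi i).mul (hm'c.measurable.comp (hYmeas.const_mul a))).div_const
          _).aestronglyMeasurable)
      (by
        filter_upwards [eventually_ge_atTop (3:ℝ)] with a ha
        refine Eventually.of_forall fun ω => ?_
        have hL : 0 < Real.log a := Real.log_pos (by linarith)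
        have := hbig a ha i ω
        rw [Real.norm_eq_abs, abs_div, abs_of_pos hL, div_le_iff₀ hL]
        linarith [this])
      (hg_int.const_mul _)
      (by
        refine Eventually.of_forall fun ω => ?_
        rcases (hYnonneg ω).lt_or_eq with hY | hY
        · -- Y ω > 0
          simp only [if_pos hY]
          have l1 : Tendsto (fun a : ℝ => a * Y ω) atTop atTop :=
            Tendsto.atTop_mul_const hY tendsto_id
          have l2 : Tendsto (fun a : ℝ => m (a * Y ω) / Real.log (a * Y ω)) atTop (nhds 1) :=
            hm_loglike.comp l1
          have l3 : Tendsto (fun a : ℝ => Real.log (a * Y ω) / Real.log a) atTop (nhds 1) := by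
            have base : Tendsto (fun a : ℝ => 1 + Real.log (Y ω) / Real.log a) atTop
                (nhds (1 + 0)) :=
              tendsto_const_nhds.add (tendsto_const_nhds.div_atTop Real.tendsto_log_atTop)
            rw [add_zero] at base
            refine Tendsto.congr' ?_ base
            filter_upwards [eventually_ge_atTop (2:ℝ)] with a ha
            have hla : Real.log a ≠ 0 := ne_of_gt (Real.log_pos (by linarith))
            show 1 + Real.log (Y ω) / Real.log a = Real.log (a * Y ω) / Real.log a
            rw [Real.log_mul (by positivity : a ≠ 0) (ne_of_gt hY), add_div, div_self hla]
          have l4 := l2.mul l3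
          rw [mul_one] at l4
          have l5 : Tendsto (fun a : ℝ => X ω i * (m (a * Y ω) / Real.log (a * Y ω) *
              (Real.log (a * Y ω) / Real.log a))) atTop (nhds (X ω i * 1)) :=
            l4.const_mul _
          refine Tendsto.congr' ?_ l5
          filter_upwards [l1.eventually (eventually_gt_atTop (1:ℝ)),
            eventually_ge_atTop (0:ℝ)] with a haY ha0
          have hne : Real.log (a * Y ω) ≠ 0 := ne_of_gt (Real.log_pos haY)
          show X ω i * (m (a * Y ω) / Real.log (a * Y ω) * (Real.log (a * Y ω) / Real.log a))
              = X ω i * m' (a * Y ω) / Real.log a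
          rw [hm'eq _ (mul_nonneg ha0 (hYnonneg ω)), div_mul_div_comm,
            mul_comm (m (a * Y ω)) (Real.log (a * Y ω)),
            mul_div_mul_left _ _ hne, mul_div_assoc]
        · -- Y ω = 0
          simp only [if_neg (show ¬ 0 < Y ω by rw [← hY]; exact lt_irrefl 0), mul_zero]
          have : Tendsto (fun a : ℝ => (X ω i * m' 0) / Real.log a) atTop (nhds 0) :=
            tendsto_const_nhds.div_atTop Real.tendsto_log_atTop
          refine this.congr fun a => ?_
          show X ω i * m' 0 / Real.log a = X ω i * m' (a * Y ω) / Real.log a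
          rw [← hY, mul_zero])
    refine key.congr fun a => ?_
    rw [integral_div]
  -- coordinates of γ and β as sums
  have hγj : ∀ j, γ j = ∑ i, G⁻¹ j i * w i := by
    intro j; rw [hγ]; simp [Matrix.mulVec, dotProduct, hwdef]
  have hβj : ∀ a j, β a j = ∑ i, G⁻¹ j i * (∫ ω, X ω i * m (a * Y ω) ∂μ) := by
    intro a j; rw [hβ a]; simp [Matrix.mulVec, dotProduct]
  -- Part 1
  have part1 : ∀ j : Fin J, Tendsto (fun a => β a j / Real.log a) atTop (nhds (γ j)) := by
    intro j
    have hsum : Tendsto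
        (fun a => ∑ i, G⁻¹ j i * ((∫ ω, X ω i * m' (a * Y ω) ∂μ) / Real.log a))
        atTop (nhds (∑ i, G⁻¹ j i * w i)) :=
      tendsto_finset_sum _ fun i _ => (hv1 i).const_mul _
    rw [← hγj j] at hsum
    refine Tendsto.congr' ?_ hsum
    filter_upwards [eventually_ge_atTop (0:ℝ)] with a ha
    rw [hβj a j, Finset.sum_div]
    exact Finset.sum_congr rfl fun i _ => by rw [hvv' a ha i, mul_div_assoc]
  -- continuity of each coordinate integral
  have hcontv : ∀ i, ContinuousOn (fun a => ∫ ω, X ω i * m' (a * Y ω) ∂μ) (Ici 0) := by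
    intro i a₀ ha₀
    have ha₀' : (0:ℝ) ≤ a₀ := ha₀
    have hA : (1:ℝ) ≤ a₀ + 1 := by linarith
    refine continuousWithinAt_of_dominated
      (bound := fun ω => (C * (2 + Real.log (a₀ + 1)) + |m 0|) * g ω)
      (Eventually.of_forall fun a => hmeasF a i) ?_ (hg_int.const_mul _) ?_
    · filter_upwards [eventually_mem_nhdsWithin,
        eventually_nhdsWithin_of_eventually_nhds (eventually_le_nhds (lt_add_one a₀))]
        with a h1 h2
      exact Eventually.of_forall fun ω => by
        rw [Real.norm_eq_abs]; exact hbnd2 (a₀ + 1) hA a ⟨h1, h2⟩ i ω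
    · exact Eventually.of_forall fun ω =>
        (continuous_const.mul (hm'c.comp (continuous_mul_right (Y ω)))).continuousWithinAt
  -- continuity of β coordinates
  have hβcont : ∀ j, ContinuousOn (fun a => β a j) (Ici 0) := by
    intro j
    have hc : ContinuousOn
        (fun a => ∑ i, G⁻¹ j i * (∫ ω, X ω i * m' (a * Y ω) ∂μ)) (Ici 0) :=
      continuousOn_finset_sum _ fun i _ => continuousOn_const.mul (hcontv i)
    refine hc.congr fun a ha => ?_
    rw [hβj a j]
    exact Finset.sum_congr rfl fun i _ => by rw [hvv' a ha i]
  -- β at 0 vanishes off the constant coordinate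
  have hβ0 : ∀ j : Fin J, j ≠ e0 → β 0 j = 0 := by
    intro j hj
    have hint0 : ∀ i, (∫ ω, X ω i * m (0 * Y ω) ∂μ) = G i e0 * m 0 := by
      intro i
      have heq : (fun ω => X ω i * m (0 * Y ω)) = fun ω => (X ω i * X ω e0) * m 0 := by
        funext ω; rw [zero_mul, hconst ω, mul_one]
      rw [heq, integral_mul_const, hG]
      rfl
    rw [hβj 0 j]
    calc ∑ i, G⁻¹ j i * (∫ ω, X ω i * m (0 * Y ω) ∂μ)
        = (∑ i, G⁻¹ j i * G i e0) * m 0 := by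
          rw [Finset.sum_mul]
          exact Finset.sum_congr rfl fun i _ => by rw [hint0 i]; ring
      _ = ((G⁻¹ * G) j e0) * m 0 := by rw [Matrix.mul_apply]
      _ = 0 := by
          rw [Matrix.nonsing_inv_mul G ((Matrix.isUnit_iff_isUnit_det G).1 hGunit),
            Matrix.one_apply_ne hj, zero_mul]
  refine ⟨fun j _ => part1 j, fun j hj hγj0 => ⟨hβcont j, ?_, ?_, ?_⟩⟩
  · -- limit at 0
    have h0 : Tendsto (fun a => β a j) (nhdsWithin 0 (Ici 0)) (nhds (β 0 j)) :=
      (hβcont j) 0 self_mem_Ici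
    rw [hβ0 j hj] at h0
    exact h0
  · -- |β| → ∞
    have h1 : Tendsto (fun a => |β a j / Real.log a|) atTop (nhds |γ j|) := (part1 j).abs
    have h2 : Tendsto (fun a => |Real.log a| * |β a j / Real.log a|) atTop atTop :=
      Tendsto.atTop_mul_pos (abs_pos.2 hγj0)
        (tendsto_abs_atTop_atTop.comp Real.tendsto_log_atTop) h1
    refine Tendsto.congr' ?_ h2
    filter_upwards [eventually_ge_atTop (2:ℝ)] with a ha
    have hla : Real.log a ≠ 0 := ne_of_gt (Real.log_pos (by linarith))
    rw [abs_div, mul_comm, div_mul_cancel₀ _ (abs_ne_zero.2 hla)]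
  · -- intermediate values
    intro βstar hβs
    have habs : Tendsto (fun a => |β a j|) atTop atTop := by
      have h1 : Tendsto (fun a => |β a j / Real.log a|) atTop (nhds |γ j|) := (part1 j).abs
      have h2 : Tendsto (fun a => |Real.log a| * |β a j / Real.log a|) atTop atTop :=
        Tendsto.atTop_mul_pos (abs_pos.2 hγj0)
          (tendsto_abs_atTop_atTop.comp Real.tendsto_log_atTop) h1
      refine Tendsto.congr' ?_ h2
      filter_upwards [eventually_ge_atTop (2:ℝ)] with a ha
      have hla : Real.log a ≠ 0 := ne_of_gt (Real.log_pos (by linarith))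
      rw [abs_div, mul_comm, div_mul_cancel₀ _ (abs_ne_zero.2 hla)]
    obtain ⟨M, hM, hM0⟩ : ∃ M : ℝ, βstar ≤ |β M j| ∧ (0:ℝ) ≤ M := by
      obtain ⟨M, h⟩ := ((habs.eventually (eventually_ge_atTop βstar)).and
        (eventually_ge_atTop (0:ℝ))).exists
      exact ⟨M, h.1, h.2⟩
    have hsub : Icc (0:ℝ) M ⊆ Ici 0 := fun x hx => hx.1
    have hivt := intermediate_value_Icc hM0 (((hβcont j).abs).mono hsub)
    have hmem : βstar ∈ Icc (|β 0 j|) (|β M j|) := by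
      rw [hβ0 j hj, abs_zero]; exact ⟨hβs.le, hM⟩
    obtain ⟨a, ha, hfa⟩ := hivt hmem
    refine ⟨a, ?_, hfa⟩
    rcases ha.1.lt_or_eq with h | h
    · exact h
    · exfalso
      rw [← h] at hfa
      simp only [hβ0 j hj, abs_zero] at hfa
      exact hβs.ne hfa
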